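/- arXiv:2509.24728 — 2 statements merged into one kernel-verified Lean document; each statement's English description precedes it below -/
import Mathlib

section
/- For a Bernoulli variable parameterized through the natural activation a(s) = ν(s) = (1 + sin(π(s−C)/A))/2 with |s − C| < A/2, the Fisher information with respect to the score s is constant: E[(d/ds log P(C))²] = π²/A². -/
open Real

/-- For a Bernoulli variable parameterized through the natural activation
`ν s = (1 + sin (π (s - C) / A)) / 2` with `|s - C| < A / 2`, the Fisher information
with respect to the score `s` is the constant `π^2 / A^2`. -/
theorem bernoulli_natural_fisher_info (C A : ℝ) (hA : 0 < A) (s : ℝ)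
    (hs : |s - C| < A / 2) :
    ((1 + Real.sin (Real.pi * (s - C) / A)) / 2) *
        (deriv (fun y : ℝ => (1 + Real.sin (Real.pi * (y - C) / A)) / 2) s /
          ((1 + Real.sin (Real.pi * (s - C) / A)) / 2)) ^ 2 +
      (1 - (1 + Real.sin (Real.pi * (s - C) / A)) / 2) *
        (deriv (fun y : ℝ => (1 + Real.sin (Real.pi * (y - C) / A)) / 2) s /
          (1 - (1 + Real.sin (Real.pi * (s - C) / A)) / 2)) ^ 2
      = Real.pi ^ 2 / A ^ 2 := by
  set θ : ℝ := Real.pi * (s - C) / A with hθ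
  have hA' : A ≠ 0 := ne_of_gt hA
  -- derivative
  have hd : HasDerivAt (fun y : ℝ => (1 + Real.sin (Real.pi * (y - C) / A)) / 2)
      (Real.pi / A * Real.cos θ / 2) s := by
    have h1 : HasDerivAt (fun y : ℝ => Real.pi * (y - C) / A) (Real.pi / A) s := by
      have : HasDerivAt (fun y : ℝ => Real.pi * (y - C) / A) (Real.pi * 1 / A) s := by
        exact (((hasDerivAt_id s).sub_const C).const_mul Real.pi).div_const A
      simpa using this
    have h2 := (Real.hasDerivAt_sin θ).comp s h1
    have h3 := (h2.const_add 1).div_const 2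
    refine h3.congr_deriv ?_
    ring
  rw [hd.deriv]
  -- cos θ ≠ 0 since |θ| < π/2
  have hθlt : |θ| < Real.pi / 2 := by
    rw [hθ, abs_div, abs_of_pos hA, abs_mul, abs_of_pos Real.pi_pos, div_lt_iff₀ hA]
    calc Real.pi * |s - C| < Real.pi * (A / 2) := by
          exact mul_lt_mul_of_pos_left hs Real.pi_pos
      _ = Real.pi / 2 * A := by ring
  have hcos : 0 < Real.cos θ := Real.cos_pos_of_mem_Ioo (abs_lt.mp hθlt |>.imp
    (fun h => by linarith) (fun h => h))
  have hsin : |Real.sin θ| < 1 := by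
    rcases lt_or_ge (|Real.sin θ|) 1 with h | h
    · exact h
    · exfalso
      have h1 : Real.sin θ ^ 2 + Real.cos θ ^ 2 = 1 := Real.sin_sq_add_cos_sq θ
      have : (1:ℝ) ≤ Real.sin θ ^ 2 := by
        have := sq_abs (Real.sin θ)
        nlinarith [abs_nonneg (Real.sin θ)]
      nlinarith
  have h1 : (0:ℝ) < 1 + Real.sin θ := by
    have := abs_lt.mp hsin; linarith [this.1]
  have h2 : (0:ℝ) < 1 - Real.sin θ := by
    have := abs_lt.mp hsin; linarith [this.2]
  have hpyth : Real.cos θ ^ 2 = (1 + Real.sin θ) * (1 - Real.sin θ) := by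
    have := Real.sin_sq_add_cos_sq θ; nlinarith
  have e1 : (1:ℝ) - (1 + Real.sin θ) / 2 = (1 - Real.sin θ) / 2 := by ring
  rw [e1]
  field_simp
  linear_combination 2 * hpyth
end

section
/- In the catnat FIM, off-diagonal entries between an ancestor w and descendant w' (w a strict prefix of w', |w'| = h'−1) vanish in expectation: ∑_{b ∈ {0,1}^H} p_b (∂ log p_b / ∂ a(w)) (∂ log p_b / ∂ a(w')) = 0, because the inner sum over descendants of w' splits as P(reach w')·a(w')·(1/a(w')) − P(reach w')·(1−a(w'))·(1/(1−a(w'))) = 0. -/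
open Finset

noncomputable def catnatP (a : List Bool → ℝ) : List Bool → ℝ
  | [] => 1
  | x :: rest => (if x then a [] else 1 - a []) * catnatP (fun w => a (x :: w)) rest

lemma catnatP_nil (a : List Bool → ℝ) : catnatP a [] = 1 := rfl

lemma catnatP_cons (a : List Bool → ℝ) (x : Bool) (l : List Bool) :
    catnatP a (x :: l) = (if x then a [] else 1 - a []) * catnatP (fun w => a (x :: w)) l := rfl

lemma catnatP_congr :
    ∀ (l : List Bool) (a a' : List Bool → ℝ),
      (∀ u, u <+: l → u ≠ l → a u = a' u) → catnatP a l = catnatP a' l := by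
  intro l
  induction l with
  | nil => intro a a' _; rfl
  | cons x l ih =>
    intro a a' h
    rw [catnatP_cons, catnatP_cons, h [] (by simp) (by simp),
      ih _ _ fun u hu hne => h (x :: u) (by simpa [List.cons_prefix_cons] using hu)
        (by simpa using hne)]

lemma catnatP_pos :
    ∀ (l : List Bool) (a : List Bool → ℝ),
      (∀ u, u <+: l → u ≠ l → a u ∈ Set.Ioo (0:ℝ) 1) → 0 < catnatP a l := by
  intro l
  induction l with
  | nil => intro a _; norm_num [catnatP_nil]
  | cons x l ih =>
    intro a h
    have h0 := h [] (by simp) (by simp)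
    rw [catnatP_cons]
    refine mul_pos ?_ (ih _ fun u hu hne => h (x :: u)
      (by simpa [List.cons_prefix_cons] using hu) (by simpa using hne))
    rcases x with _ | _ <;> simp <;> [linarith [h0.2]; exact h0.1]

lemma catnatP_append :
    ∀ (u : List Bool) (v : List Bool) (a : List Bool → ℝ),
      catnatP a (u ++ v) = catnatP a u * catnatP (fun s => a (u ++ s)) v := by
  intro u
  induction u with
  | nil => intro v a; simp [catnatP_nil]
  | cons x u ih =>
    intro v a
    rw [List.cons_append, catnatP_cons, ih, catnatP_cons]
    simp [mul_assoc]

lemma sum_split (n : ℕ) (f : List Bool → ℝ) :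
    ∑ b : Fin (n+1) → Bool, f (List.ofFn b)
      = ∑ x : Bool, ∑ r : Fin n → Bool, f (x :: List.ofFn r) := by
  rw [← Equiv.sum_comp (Fin.consEquiv (fun _ : Fin (n+1) => Bool)) fun b => f (List.ofFn b),
    Fintype.sum_prod_type]
  refine Finset.sum_congr rfl fun x _ => Finset.sum_congr rfl fun r _ => ?_
  congr 1
  simp [Fin.consEquiv, List.ofFn_succ, Fin.cons_zero, Fin.cons_succ]

lemma sum_catnatP : ∀ (n : ℕ) (a : List Bool → ℝ),
    ∑ b : Fin n → Bool, catnatP a (List.ofFn b) = 1 := by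
  intro n
  induction n with
  | zero => intro a; simp [catnatP_nil]
  | succ n ih =>
    intro a
    rw [sum_split]
    simp only [catnatP_cons, ← Finset.mul_sum, ih]
    simp [Fintype.sum_bool]

open Classical in
noncomputable def Dv (a : List Bool → ℝ) (w l : List Bool) : ℝ :=
  if w <+: l ∧ w.length < l.length then
    (if l.getD w.length false then (a w)⁻¹ else -(1 - a w)⁻¹) else 0

lemma Dv_nil_cons (a : List Bool → ℝ) (x : Bool) (l : List Bool) :
    Dv a [] (x :: l) = if x then (a [])⁻¹ else -(1 - a [])⁻¹ := by
  rw [Dv, if_pos ⟨by simp, by simp⟩]; rfl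

lemma Dv_cons_cons (a : List Bool → ℝ) (y x : Bool) (w l : List Bool) :
    Dv a (y :: w) (x :: l) = if x = y then Dv (fun u => a (y :: u)) w l else 0 := by
  by_cases hxy : x = y
  · subst hxy
    rw [if_pos rfl, Dv, Dv]
    by_cases hc : w <+: l ∧ w.length < l.length
    · rw [if_pos ⟨List.cons_prefix_cons.2 ⟨rfl, hc.1⟩, by simpa using hc.2⟩, if_pos hc]
      rfl
    · rw [if_neg, if_neg hc]
      rintro ⟨h1, h2⟩
      exact hc ⟨(List.cons_prefix_cons.1 h1).2, by simpa using h2⟩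
  · rw [if_neg hxy, Dv, if_neg]
    rintro ⟨h1, -⟩
    exact hxy (List.cons_prefix_cons.1 h1).1.symm

lemma Dv_append (a : List Bool → ℝ) (w : List Bool) (x : Bool) (r : List Bool) :
    Dv a w (w ++ x :: r) = if x then (a w)⁻¹ else -(1 - a w)⁻¹ := by
  rw [Dv, if_pos ⟨⟨x :: r, rfl⟩, by simp⟩, List.getD_append_right _ _ _ _ le_rfl]
  simp

lemma sum_catnatP_Dv : ∀ (w : List Bool) (n : ℕ) (a : List Bool → ℝ),
    w.length < n → (∀ u, u.length < n → a u ∈ Set.Ioo (0:ℝ) 1) →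
    ∑ b : Fin n → Bool, catnatP a (List.ofFn b) * Dv a w (List.ofFn b) = 0 := by
  intro w
  induction w with
  | nil =>
    intro n a hn ha
    obtain ⟨N, rfl⟩ : ∃ N, n = N + 1 := ⟨n - 1, by omega⟩
    rw [sum_split N (fun l => catnatP a l * Dv a [] l)]
    simp only [catnatP_cons, Dv_nil_cons, mul_assoc, mul_comm, mul_left_comm,
      ← Finset.mul_sum]
    rw [Fintype.sum_bool]
    simp only [if_true, if_false, Bool.false_eq_true, ↓reduceIte, sum_catnatP, mul_one]
    have h0 := ha [] (by omega)
    have h1 : a [] ≠ 0 := ne_of_gt h0.1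
    have h2 : (1:ℝ) - a [] ≠ 0 := by have := h0.2; intro h; linarith
    field_simp
    norm_num
  | cons y w ih =>
    intro n a hn ha
    obtain ⟨N, rfl⟩ : ∃ N, n = N + 1 := ⟨n - 1, by omega⟩
    rw [sum_split N (fun l => catnatP a l * Dv a (y :: w) l), Fintype.sum_bool]
    have key : ∀ x : Bool, ∑ r : Fin N → Bool,
        catnatP a (x :: List.ofFn r) * Dv a (y :: w) (x :: List.ofFn r) = 0 := by
      intro x
      by_cases hxy : x = y
      · subst hxy
        simp only [catnatP_cons, Dv_cons_cons, eq_self_iff_true, if_true, mul_assoc, ← Finset.mul_sum]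
        rw [ih N _ (by simpa using hn) (fun u hu => ha (x :: u) (by simpa using hu)),
          mul_zero]
      · simp [Dv_cons_cons, hxy]
    rw [key true, key false, add_zero]

lemma sum_catnatP_Dv_Dv : ∀ (w w' : List Bool) (n : ℕ) (a : List Bool → ℝ),
    w <+: w' → w ≠ w' → w'.length < n →
    (∀ u, u.length < n → a u ∈ Set.Ioo (0:ℝ) 1) →
    ∑ b : Fin n → Bool,
      catnatP a (List.ofFn b) * Dv a w (List.ofFn b) * Dv a w' (List.ofFn b) = 0 := by
  intro w
  induction w with
  | nil =>
    intro w' n a hpre hne hn ha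
    obtain ⟨y, w₂, rfl⟩ : ∃ y w₂, w' = y :: w₂ := by
      cases w' with
      | nil => exact absurd rfl hne
      | cons y w₂ => exact ⟨y, w₂, rfl⟩
    obtain ⟨N, rfl⟩ : ∃ N, n = N + 1 := ⟨n - 1, by omega⟩
    rw [sum_split N (fun l => catnatP a l * Dv a [] l * Dv a (y :: w₂) l), Fintype.sum_bool]
    have key : ∀ x : Bool, ∑ r : Fin N → Bool,
        catnatP a (x :: List.ofFn r) * Dv a [] (x :: List.ofFn r)
          * Dv a (y :: w₂) (x :: List.ofFn r) = 0 := by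
      intro x
      by_cases hxy : x = y
      · subst hxy
        simp only [catnatP_cons, Dv_nil_cons, Dv_cons_cons, eq_self_iff_true, if_true]
        have : ∀ r : Fin N → Bool,
            (if x then a [] else 1 - a []) * catnatP (fun u => a (x :: u)) (List.ofFn r)
              * (if x then (a [])⁻¹ else -(1 - a [])⁻¹)
              * Dv (fun u => a (x :: u)) w₂ (List.ofFn r)
            = ((if x then a [] else 1 - a []) * (if x then (a [])⁻¹ else -(1 - a [])⁻¹))
              * (catnatP (fun u => a (x :: u)) (List.ofFn r)
                * Dv (fun u => a (x :: u)) w₂ (List.ofFn r)) := by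
          intro r; ring
        simp only [this, ← Finset.mul_sum]
        rw [sum_catnatP_Dv w₂ N _ (by simpa using hn)
          (fun u hu => ha (x :: u) (by simpa using hu)), mul_zero]
      · simp [Dv_cons_cons, hxy]
    rw [key true, key false, add_zero]
  | cons z w₂ ih =>
    intro w' n a hpre hne hn ha
    obtain ⟨w₂', rfl⟩ : ∃ w₂', w' = z :: w₂' := by
      cases w' with
      | nil => exact absurd hpre (by simp)
      | cons y w₂' =>
        obtain ⟨rfl, -⟩ := List.cons_prefix_cons.1 hpre
        exact ⟨w₂', rfl⟩
    obtain ⟨N, rfl⟩ : ∃ N, n = N + 1 := ⟨n - 1, by omega⟩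
    rw [sum_split N (fun l => catnatP a l * Dv a (z :: w₂) l * Dv a (z :: w₂') l),
      Fintype.sum_bool]
    have key : ∀ x : Bool, ∑ r : Fin N → Bool,
        catnatP a (x :: List.ofFn r) * Dv a (z :: w₂) (x :: List.ofFn r)
          * Dv a (z :: w₂') (x :: List.ofFn r) = 0 := by
      intro x
      by_cases hxz : x = z
      · subst hxz
        simp only [catnatP_cons, Dv_cons_cons, eq_self_iff_true, if_true, mul_assoc, ← Finset.mul_sum]
        have h := ih w₂' N (fun u => a (x :: u)) (List.cons_prefix_cons.1 hpre).2
          (by simpa using hne) (by simpa using hn)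
          (fun u hu => ha (x :: u) (by simpa using hu))
        simp only [mul_assoc] at h
        rw [h, mul_zero]
      · simp [Dv_cons_cons, hxz]
    rw [key true, key false, add_zero]

lemma deriv_log_catnatP (a : List Bool → ℝ) (w l : List Bool)
    (hl : ∀ u, u <+: l → u ≠ l → a u ∈ Set.Ioo (0:ℝ) 1)
    (hw : a w ∈ Set.Ioo (0:ℝ) 1) :
    deriv (fun t : ℝ => Real.log (catnatP (Function.update a w t) l)) (a w)
      = Dv a w l := by
  by_cases hc : w <+: l ∧ w.length < l.length
  · obtain ⟨⟨s, rfl⟩, hlen⟩ := hc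
    obtain ⟨x, r, rfl⟩ : ∃ x r, s = x :: r := by
      cases s with
      | nil => simp at hlen
      | cons x r => exact ⟨x, r, rfl⟩
    rw [Dv_append]
    -- positivity of the constant factors
    have hC1 : 0 < catnatP a w := by
      apply catnatP_pos
      intro u hu hne
      refine hl u (hu.trans ⟨x :: r, rfl⟩) ?_
      intro h
      subst h
      have := hu.length_le
      simp at this
    have hC2 : 0 < catnatP (fun s => a (w ++ x :: s)) r := by
      apply catnatP_pos
      intro u hu hne
      obtain ⟨v, rfl⟩ := hu
      exact hl (w ++ x :: u) ⟨v, by simp⟩ (by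
        intro h
        apply hne
        have h2 : u = u ++ v := by simpa using h
        have h3 : v = [] := by simpa using h2.symm
        simp [h3])
    have hfun : ∀ t : ℝ, catnatP (Function.update a w t) (w ++ x :: r)
        = catnatP a w * ((if x then t else 1 - t)
            * catnatP (fun s => a (w ++ x :: s)) r) := by
      intro t
      rw [catnatP_append]
      congr 1
      · apply catnatP_congr
        intro u hu hne
        exact Function.update_of_ne hne _ _
      · rw [catnatP_cons]
        have hg0 : Function.update a w t (w ++ []) = t := by
          rw [List.append_nil, Function.update_self]
        have hg1 : (fun s => Function.update a w t (w ++ (x :: s)))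
            = fun s => a (w ++ x :: s) := by
          funext s
          refine Function.update_of_ne ?_ _ _
          intro h
          have := congrArg List.length h
          simp at this
        rw [hg0, hg1]
    simp only [hfun]
    set C1 := catnatP a w with hC1def
    set C2 := catnatP (fun s => a (w ++ x :: s)) r with hC2def
    cases x with
    | true =>
      have hEv : (fun t : ℝ => Real.log (C1 * ((if true then t else 1 - t) * C2)))
          =ᶠ[nhds (a w)] fun t => Real.log C1 + (Real.log t + Real.log C2) := by
        filter_upwards [eventually_gt_nhds hw.1] with t ht
        rw [if_pos rfl, Real.log_mul (ne_of_gt hC1) (by positivity),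
          Real.log_mul (ne_of_gt ht) (ne_of_gt hC2)]
      rw [hEv.deriv_eq]
      have hD : HasDerivAt (fun t : ℝ => Real.log C1 + (Real.log t + Real.log C2))
          (a w)⁻¹ (a w) :=
        ((Real.hasDerivAt_log (ne_of_gt hw.1)).add_const _).const_add _
      rw [hD.deriv]
      simp
    | false =>
      have h1t : 0 < 1 - a w := by linarith [hw.2]
      have hEv : (fun t : ℝ => Real.log (C1 * ((if false then t else 1 - t) * C2)))
          =ᶠ[nhds (a w)] fun t => Real.log C1 + (Real.log (1 - t) + Real.log C2) := by
        filter_upwards [eventually_lt_nhds hw.2] with t ht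
        rw [if_neg (by simp), Real.log_mul (ne_of_gt hC1) (by nlinarith [hC2]),
          Real.log_mul (by intro h; nlinarith) (ne_of_gt hC2)]
      rw [hEv.deriv_eq]
      have hinner : HasDerivAt (fun t : ℝ => 1 - t) (-1) (a w) :=
        (hasDerivAt_id (a w)).const_sub 1
      have hlog : HasDerivAt (fun t : ℝ => Real.log (1 - t))
          ((1 - a w)⁻¹ * -1) (a w) := by
        exact
          (Real.hasDerivAt_log (ne_of_gt h1t)).comp (a w) hinner
      have hD : HasDerivAt
          (fun t : ℝ => Real.log C1 + (Real.log (1 - t) + Real.log C2))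
          ((1 - a w)⁻¹ * -1) (a w) := (hlog.add_const _).const_add _
      rw [hD.deriv]
      simp
  · rw [Dv, if_neg hc]
    have : (fun t : ℝ => Real.log (catnatP (Function.update a w t) l))
        = fun _ => Real.log (catnatP a l) := by
      funext t
      congr 1
      apply catnatP_congr
      intro u hu hne
      apply Function.update_of_ne
      intro h
      subst h
      rcases Nat.lt_or_ge u.length l.length with h1 | h1
      · exact hc ⟨hu, h1⟩
      · exact hne (List.prefix_iff_eq_take.1 hu ▸ by
          rw [List.take_of_length_le (by omega)])
    rw [this, deriv_const]

/-- For an ancestor `w` and strict descendant `w'` (`w` a strict prefix of `w'`),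
the off-diagonal FIM entry vanishes in expectation over the leaves. -/
theorem catnat_fim_offdiag_ancestor (H : ℕ) (hH : 1 ≤ H) (a : List Bool → ℝ)
    (ha : ∀ u : List Bool, u.length < H → a u ∈ Set.Ioo (0:ℝ) 1)
    (w w' : List Bool) (hw : w.length < H) (hw' : w'.length < H)
    (hpre : w <+: w') (hne : w ≠ w') :
    ∑ b : Fin H → Bool,
      catnatP a (List.ofFn b) *
        deriv (fun t : ℝ =>
          Real.log (catnatP (Function.update a w t) (List.ofFn b))) (a w) *
        deriv (fun t : ℝ =>
          Real.log (catnatP (Function.update a w' t) (List.ofFn b))) (a w') = 0 := by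
  have hprefixes : ∀ (b : Fin H → Bool) (u : List Bool),
      u <+: List.ofFn b → u ≠ List.ofFn b → a u ∈ Set.Ioo (0:ℝ) 1 := by
    intro b u hu hne'
    refine ha u (lt_of_le_of_ne (by simpa using hu.length_le) fun h => hne' ?_)
    exact hu.eq_of_length (by simpa using h)
  have key : ∀ b : Fin H → Bool,
      catnatP a (List.ofFn b) *
        deriv (fun t : ℝ =>
          Real.log (catnatP (Function.update a w t) (List.ofFn b))) (a w) *
        deriv (fun t : ℝ =>
          Real.log (catnatP (Function.update a w' t) (List.ofFn b))) (a w')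
      = catnatP a (List.ofFn b) * Dv a w (List.ofFn b) * Dv a w' (List.ofFn b) := by
    intro b
    rw [deriv_log_catnatP a w _ (hprefixes b) (ha w hw),
      deriv_log_catnatP a w' _ (hprefixes b) (ha w' hw')]
  rw [Finset.sum_congr rfl fun b _ => key b]
  exact sum_catnatP_Dv_Dv w w' H a hpre hne hw' ha
end
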